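/- In S = M₂(ℝ⁺), if I is a subtractive left ideal with E₁ ⊊ I, where E₁ = { [[a,0],[b,0]] : a, b ∈ ℝ⁺ }, then I = S. -/
import Mathlib


/-- The 2×2 matrix semiring over the nonnegative reals. -/
abbrev M2 : Type := Matrix (Fin 2) (Fin 2) NNReal

/-- A subset of the semiring is a left ideal. -/
def IsLeftIdeal (I : Set M2) : Prop :=
  0 ∈ I ∧ (∀ x ∈ I, ∀ y ∈ I, x + y ∈ I) ∧ ∀ s : M2, ∀ x ∈ I, s * x ∈ I

/-- A subset is subtractive: `s + x = y` with `x, y ∈ I` implies `s ∈ I`. -/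
def IsSubtractive (I : Set M2) : Prop :=
  ∀ s x y : M2, x ∈ I → y ∈ I → s + x = y → s ∈ I

/-- `E₁ = { [[a,0],[b,0]] : a, b ∈ ℝ⁺ }`. -/
def E1 : Set M2 := {A | A 0 1 = 0 ∧ A 1 1 = 0}

/-- If `I` is a subtractive left ideal of `M₂(ℝ⁺)` with `E₁ ⊊ I`,
then `I = S`. -/
theorem stmt_9 (I : Set M2) (hI : IsLeftIdeal I) (hSub : IsSubtractive I)
    (hE1 : E1 ⊂ I) : I = Set.univ := by
  have hE1sub := hE1.subset
  obtain ⟨A, hAI, hAE⟩ := (Set.ssubset_iff_of_subset hE1sub).mp hE1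
  -- get j with A j 1 ≠ 0
  have hj : ∃ j : Fin 2, A j 1 ≠ 0 := by
    by_contra h
    push_neg at h
    exact hAE ⟨h 0, h 1⟩
  obtain ⟨j, hc⟩ := hj
  set c := A j 1 with hcdef
  -- B has row 0 = c⁻¹ • (row j of A), row 1 = 0
  set s1 : M2 := Matrix.of fun i k => if i = 0 ∧ k = j then c⁻¹ else 0 with hs1
  have hB : s1 * A ∈ I := hI.2.2 s1 A hAI
  set B : M2 := s1 * A with hBdef
  have hB0 : ∀ k, B 0 k = c⁻¹ * A j k := by
    intro k
    simp only [hBdef, Matrix.mul_apply, hs1, Matrix.of_apply, Fin.sum_univ_two]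
    fin_cases j <;> simp
  have hB1 : ∀ k, B 1 k = 0 := by
    intro k
    simp only [hBdef, Matrix.mul_apply, hs1, Matrix.of_apply, Fin.sum_univ_two]
    fin_cases j <;> simp
  have hB01 : B 0 1 = 1 := by rw [hB0]; exact inv_mul_cancel₀ hc
  -- e01 ∈ I via subtractivity
  set e01 : M2 := Matrix.of fun i k => if i = 0 ∧ k = 1 then 1 else 0 with he01
  set D : M2 := Matrix.of fun i k => if i = 0 ∧ k = 0 then B 0 0 else 0 with hD
  have hDI : D ∈ I := hE1sub ⟨by simp [hD], by simp [hD]⟩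
  have hsum : e01 + D = B := by
    funext i k
    fin_cases i <;> fin_cases k <;>
      simp [he01, hD, Matrix.add_apply, hB01, hB1]
  have he01I : e01 ∈ I := hSub e01 D B hDI hB hsum
  -- every matrix is in I
  ext M
  simp only [Set.mem_univ, iff_true]
  set M1 : M2 := Matrix.of fun i k => if k = 0 then M i 0 else 0 with hM1
  set s2 : M2 := Matrix.of fun i k => if k = 0 then M i 1 else 0 with hs2
  have hM1I : M1 ∈ I := hE1sub ⟨by simp [hM1], by simp [hM1]⟩
  have hs2I : s2 * e01 ∈ I := hI.2.2 s2 e01 he01I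
  have : M = M1 + s2 * e01 := by
    funext i k
    simp only [Matrix.add_apply, Matrix.mul_apply, Fin.sum_univ_two, hM1, hs2, he01,
      Matrix.of_apply]
    fin_cases k <;> simp
  rw [this]
  exact hI.2.1 M1 hM1I _ hs2I
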